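/- For a single copy (N = 1), any finite POVM {P_i} with outcomes r_i on H that is unbiased for the Hermitian observable A (∑_i r_i Tr[P_i ρ] = Tr[Aρ] for all density operators ρ) has variance ∑_i r_i² Tr[P_i ρ] − (Tr[Aρ])² ≥ Tr[A²ρ] − (Tr[Aρ])² for every density operator ρ, with equality achieved by the spectral measurement of A. -/

import Mathlib

set_option maxHeartbeats 1000000


open Matrix BigOperators Finset
open scoped ComplexOrder

/-- N-fold tensor power of a matrix (operator on H^{⊗N} with H = ℂ^d). -/
def tensorPow {d N : ℕ} (ρ : Matrix (Fin d) (Fin d) ℂ) :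
    Matrix (Fin N → Fin d) (Fin N → Fin d) ℂ :=
  Matrix.of fun f g => ∏ i, ρ (f i) (g i)

/-- Conjugation Π_σ X Π_σ† of an operator on H^{⊗N} by the unitary permuting tensor factors. -/
def permAction {d N : ℕ} (σ : Equiv.Perm (Fin N))
    (X : Matrix (Fin N → Fin d) (Fin N → Fin d) ℂ) :
    Matrix (Fin N → Fin d) (Fin N → Fin d) ℂ :=
  Matrix.of fun f g => X (f ∘ σ) (g ∘ σ)

/-- Density operator: positive semidefinite with unit trace. -/
def IsDensity {d : ℕ} (ρ : Matrix (Fin d) (Fin d) ℂ) : Prop :=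
  ρ.PosSemidef ∧ ρ.trace = 1

/-- A^{(k)} = I^{⊗(k-1)} ⊗ A ⊗ I^{⊗(N-k)}, the observable A acting on the k-th factor. -/
noncomputable def siteOp {d N : ℕ} (k : Fin N) (A : Matrix (Fin d) (Fin d) ℂ) :
    Matrix (Fin N → Fin d) (Fin N → Fin d) ℂ :=
  Matrix.of fun f g => A (f k) (g k) * ∏ i ∈ Finset.univ.erase k, (if f i = g i then (1 : ℂ) else 0)

/-- Matrix element ⟨ψ₁|⊗⋯⊗⟨ψ_N| X |φ₁⟩⊗⋯⊗|φ_N⟩ on product vectors. -/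
noncomputable def prodElem {d N : ℕ} (X : Matrix (Fin N → Fin d) (Fin N → Fin d) ℂ)
    (ψ φ : Fin N → Fin d → ℂ) : ℂ :=
  ∑ f : Fin N → Fin d, ∑ g : Fin N → Fin d,
    (starRingEnd ℂ) (∏ i, ψ i (f i)) * X f g * ∏ i, φ i (g i)

lemma trace_psd_nonneg {d : ℕ} {M : Matrix (Fin d) (Fin d) ℂ} (hM : M.PosSemidef) :
    0 ≤ M.trace := by
  rw [Matrix.trace]
  apply Finset.sum_nonneg
  intro i _
  have := hM.dotProduct_mulVec_nonneg (Pi.single i 1)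
  rw [Matrix.mulVec_single, dotProduct] at this
  simpa [Pi.single_apply, apply_ite, Finset.sum_ite_eq'] using this

lemma trace_mul_psd_nonneg {d : ℕ} {P ρ : Matrix (Fin d) (Fin d) ℂ}
    (hP : P.PosSemidef) (hρ : ρ.PosSemidef) : 0 ≤ (P * ρ).trace := by
  open scoped MatrixOrder in
  obtain ⟨B, rfl⟩ := CStarAlgebra.nonneg_iff_eq_star_mul_self.mp hP.nonneg
  rw [Matrix.mul_assoc, Matrix.trace_mul_comm]
  exact trace_psd_nonneg (hρ.mul_mul_conjTranspose_same B)

lemma quad_form_zero {d : ℕ} {M : Matrix (Fin d) (Fin d) ℂ}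
    (h : ∀ v : Fin d → ℂ, dotProduct (star v) (M *ᵥ v) = 0) : M = 0 := by
  have hT : Matrix.toEuclideanLin M = 0 := by
    rw [← inner_map_self_eq_zero]
    intro x
    rw [EuclideanSpace.inner_eq_star_dotProduct]
    simp only [Matrix.toEuclideanLin_apply, Equiv.apply_symm_apply]
    rw [dotProduct_star, dotProduct_comm, h x.ofLp, star_zero]
  simpa using (LinearEquiv.map_eq_zero_iff Matrix.toEuclideanLin).mp hT

lemma trace_smul_sum {d : ℕ} {ι : Type} [Fintype ι] (c : ι → ℂ)
    (P : ι → Matrix (Fin d) (Fin d) ℂ) (ρ : Matrix (Fin d) (Fin d) ℂ) :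
    ((∑ i, c i • P i) * ρ).trace = ∑ i, c i * (P i * ρ).trace := by
  rw [Finset.sum_mul, Matrix.trace_sum]
  simp [Matrix.smul_mul, smul_eq_mul]

lemma trace_mul_vecMulVec {d : ℕ} (M : Matrix (Fin d) (Fin d) ℂ) (v : Fin d → ℂ) :
    (M * Matrix.vecMulVec v (star v)).trace = dotProduct (star v) (M *ᵥ v) := by
  simp only [Matrix.trace, Matrix.diag, Matrix.mul_apply, Matrix.vecMulVec_apply,
    dotProduct, Matrix.mulVec, Pi.star_apply]
  apply Finset.sum_congr rfl
  intro a _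
  rw [Finset.mul_sum]
  apply Finset.sum_congr rfl
  intro b _
  ring

lemma vecMulVec_posSemidef {d : ℕ} (v : Fin d → ℂ) :
    (Matrix.vecMulVec v (star v)).PosSemidef := by
  refine Matrix.PosSemidef.of_dotProduct_mulVec_nonneg ?_ ?_
  · ext a b
    simp [Matrix.conjTranspose_apply, Matrix.vecMulVec_apply, mul_comm]
  · intro x
    have : dotProduct (star x) ((Matrix.vecMulVec v (star v)) *ᵥ x)
        = star (dotProduct (star v) x) * (dotProduct (star v) x) := by
      simp only [dotProduct, Matrix.mulVec, Matrix.vecMulVec_apply, Pi.star_apply,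
        star_sum, star_mul', RCLike.star_def, Complex.conj_conj, Finset.sum_mul,
        Finset.mul_sum]
      rw [Finset.sum_comm]
      apply Finset.sum_congr rfl; intro a _
      apply Finset.sum_congr rfl; intro b _
      ring
    rw [this]
    exact star_mul_self_nonneg _

lemma unbiased_eq {d : ℕ} {ι : Type} [Fintype ι] (A : Matrix (Fin d) (Fin d) ℂ)
    (P : ι → Matrix (Fin d) (Fin d) ℂ) (r : ι → ℝ)
    (hunb : ∀ ρ, IsDensity ρ → ∑ i, (r i : ℂ) * (P i * ρ).trace = (A * ρ).trace) :
    (∑ i, (r i : ℂ) • P i) = A := by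
  rw [← sub_eq_zero]
  apply quad_form_zero
  intro v
  by_cases hv : v = 0
  · simp [hv]
  · obtain ⟨a, ha⟩ : ∃ a, v a ≠ 0 := by
      by_contra h; push_neg at h; exact hv (funext h)
    set c : ℝ := ∑ b, Complex.normSq (v b) with hc
    have hcpos : 0 < c := Finset.sum_pos' (fun i _ => Complex.normSq_nonneg _)
      ⟨a, Finset.mem_univ a, by simpa [Complex.normSq_pos] using ha⟩
    set t : ℝ := (Real.sqrt c)⁻¹ with ht
    have htpos : 0 < t := by positivity
    set w : Fin d → ℂ := fun b => (t : ℂ) * v b with hw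
    set ρv : Matrix (Fin d) (Fin d) ℂ := Matrix.vecMulVec w (star w) with hρv
    have hden : IsDensity ρv := by
      refine ⟨vecMulVec_posSemidef w, ?_⟩
      have : ρv.trace = ∑ b, (w b * (starRingEnd ℂ) (w b)) := by
        simp [hρv, Matrix.trace, Matrix.diag, Matrix.vecMulVec_apply]
      rw [this]
      have : ∀ b, w b * (starRingEnd ℂ) (w b) = ((t^2 * Complex.normSq (v b) : ℝ) : ℂ) := by
        intro b
        rw [hw]
        simp only [_root_.map_mul, Complex.conj_ofReal]
        push_cast
        rw [show (↑(√c)⁻¹ : ℂ) * v b * ((↑(√c)⁻¹ : ℂ) * (starRingEnd ℂ) (v b))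
            = (↑(√c)⁻¹ : ℂ)^2 * (v b * (starRingEnd ℂ) (v b)) by ring, Complex.mul_conj]
      rw [Finset.sum_congr rfl fun b _ => this b, ← Complex.ofReal_sum]
      rw [← Finset.mul_sum, ← hc, ht]
      rw [show ((Real.sqrt c)⁻¹)^2 * c = 1 by
        rw [inv_pow, Real.sq_sqrt hcpos.le, inv_mul_cancel₀ hcpos.ne']]
      norm_num
    have h0 : ((∑ i, (r i : ℂ) • P i - A) * ρv).trace = 0 := by
      rw [Matrix.sub_mul, Matrix.trace_sub, trace_smul_sum, hunb ρv hden, sub_self]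
    rw [trace_mul_vecMulVec] at h0
    have hscale : dotProduct (star w) ((∑ i, (r i : ℂ) • P i - A) *ᵥ w)
        = ((t:ℂ) * (t:ℂ)) * dotProduct (star v) ((∑ i, (r i : ℂ) • P i - A) *ᵥ v) := by
      set M := ∑ i, (r i : ℂ) • P i - A
      simp only [dotProduct, Matrix.mulVec, Pi.star_apply, hw, Finset.mul_sum,
        star_mul', Complex.star_def, Complex.conj_ofReal]
      apply Finset.sum_congr rfl; intro b _
      apply Finset.sum_congr rfl; intro e _
      ring
    rw [hscale] at h0
    have htne : ((t:ℂ) * (t:ℂ)) ≠ 0 := by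
      simp only [ne_eq, mul_self_eq_zero, Complex.ofReal_eq_zero]
      exact htpos.ne'
    exact (mul_eq_zero.mp h0).resolve_left htne

lemma part1 {d : ℕ} (A : Matrix (Fin d) (Fin d) ℂ) (hA : A.IsHermitian)
    {ι : Type} [Fintype ι] (P : ι → Matrix (Fin d) (Fin d) ℂ) (r : ι → ℝ)
    (hP : ∀ i, (P i).PosSemidef) (hPsum : ∑ i, P i = 1)
    (hunb : ∀ ρ, IsDensity ρ → ∑ i, (r i : ℂ) * (P i * ρ).trace = (A * ρ).trace)
    (ρ : Matrix (Fin d) (Fin d) ℂ) (hρ : IsDensity ρ) :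
    ((A * A * ρ).trace).re ≤ ∑ i, (r i) ^ 2 * ((P i * ρ).trace).re := by
  have hBA : (∑ i, (r i : ℂ) • P i) = A := unbiased_eq A P r hunb
  set X : ι → Matrix (Fin d) (Fin d) ℂ := fun i => (r i : ℂ) • 1 - A with hX
  have hXh : ∀ i, (X i)ᴴ = X i := by
    intro i
    simp [hX, Matrix.conjTranspose_smul, Complex.star_def, Complex.conj_ofReal, hA.eq]
  have hpsd : ∀ i, (X i * P i * X i).PosSemidef := by
    intro i
    have := (hP i).mul_mul_conjTranspose_same (X i)
    rwa [hXh i] at this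
  have hexp : ∑ i, X i * P i * X i = (∑ i, ((r i:ℂ)^2) • P i) - A * A := by
    have e1 : ∀ i, X i * P i * X i
        = ((r i:ℂ)^2) • P i - (r i:ℂ) • (P i * A) - (r i:ℂ) • (A * P i) + A * P i * A := by
      intro i
      simp only [hX, Matrix.sub_mul, Matrix.mul_sub, Matrix.smul_mul, Matrix.mul_smul,
        Matrix.one_mul, Matrix.mul_one, smul_sub, smul_smul, ← pow_two]
      abel
    rw [Finset.sum_congr rfl fun i _ => e1 i]
    simp only [Finset.sum_add_distrib, Finset.sum_sub_distrib]
    have e2 : ∑ i, (r i:ℂ) • (P i * A) = A * A := by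
      calc ∑ i, (r i:ℂ) • (P i * A) = (∑ i, (r i:ℂ) • P i) * A := by
            rw [Finset.sum_mul]; exact Finset.sum_congr rfl fun i _ => (smul_mul_assoc _ _ _).symm
        _ = A * A := by rw [hBA]
    have e3 : ∑ i, (r i:ℂ) • (A * P i) = A * A := by
      calc ∑ i, (r i:ℂ) • (A * P i) = A * (∑ i, (r i:ℂ) • P i) := by
            rw [Finset.mul_sum]; exact Finset.sum_congr rfl fun i _ => (mul_smul_comm _ _ _).symm
        _ = A * A := by rw [hBA]
    have e4 : ∑ i, A * P i * A = A * A := by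
      calc ∑ i, A * P i * A = A * (∑ i, P i) * A := by
            rw [Finset.mul_sum, Finset.sum_mul]
        _ = A * A := by rw [hPsum, Matrix.mul_one]
    rw [e2, e3, e4]
    abel
  have hnn : 0 ≤ (((∑ i, ((r i:ℂ)^2) • P i) - A * A) * ρ).trace := by
    rw [← hexp, Finset.sum_mul, Matrix.trace_sum]
    exact Finset.sum_nonneg fun i _ => trace_mul_psd_nonneg (hpsd i) hρ.1
  rw [Matrix.sub_mul, Matrix.trace_sub, trace_smul_sum] at hnn
  have hre0 := (Complex.nonneg_iff.mp hnn).1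
  rw [Complex.sub_re, Complex.re_sum] at hre0
  have hre : ∀ i, (((r i:ℂ)^2) * (P i * ρ).trace).re = r i^2 * ((P i * ρ).trace).re := by
    intro i
    rw [show ((r i:ℂ)^2) = ((r i^2 : ℝ) : ℂ) by push_cast; ring, Complex.re_ofReal_mul]
  rw [Finset.sum_congr rfl fun i _ => hre i] at hre0
  linarith

lemma part2 {d : ℕ} (A : Matrix (Fin d) (Fin d) ℂ) (hA : A.IsHermitian) :
    ∃ (Q : Fin d → Matrix (Fin d) (Fin d) ℂ) (s : Fin d → ℝ),
      (∀ i, (Q i).IsHermitian ∧ Q i * Q i = Q i) ∧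
      (∀ i j, i ≠ j → Q i * Q j = 0) ∧
      (∑ i, Q i = 1) ∧
      (A = ∑ i, (s i : ℂ) • Q i) ∧
      (A * A = ∑ i, ((s i : ℂ)^2) • Q i) := by
  set U : Matrix (Fin d) (Fin d) ℂ := (hA.eigenvectorUnitary : Matrix (Fin d) (Fin d) ℂ) with hU
  set s : Fin d → ℝ := hA.eigenvalues with hs
  set Q : Fin d → Matrix (Fin d) (Fin d) ℂ :=
    fun i => Matrix.of fun a b => U a i * (starRingEnd ℂ) (U b i) with hQ
  have hUU : star U * U = 1 := Matrix.mem_unitaryGroup_iff'.mp hA.eigenvectorUnitary.2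
  have hUU' : U * star U = 1 := Matrix.mem_unitaryGroup_iff.mp hA.eigenvectorUnitary.2
  have hortho : ∀ i j, (∑ c, (starRingEnd ℂ) (U c i) * U c j) = if i = j then 1 else 0 := by
    intro i j
    have h2 := congrFun (congrFun hUU i) j
    simpa [Matrix.mul_apply, Matrix.one_apply, Matrix.star_apply, Complex.star_def] using h2
  have hcomp : ∀ a b, (∑ i, U a i * (starRingEnd ℂ) (U b i)) = if a = b then 1 else 0 := by
    intro a b
    have h2 := congrFun (congrFun hUU' a) b
    simpa [Matrix.mul_apply, Matrix.one_apply, Matrix.star_apply, Complex.star_def] using h2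
  have hQmul : ∀ i j, Q i * Q j = if i = j then Q i else 0 := by
    intro i j
    ext a b
    simp only [Matrix.mul_apply, hQ, Matrix.of_apply]
    have : ∑ c, U a i * (starRingEnd ℂ) (U c i) * (U c j * (starRingEnd ℂ) (U b j))
        = (∑ c, (starRingEnd ℂ) (U c i) * U c j) * (U a i * (starRingEnd ℂ) (U b j)) := by
      rw [Finset.sum_mul]
      exact Finset.sum_congr rfl fun c _ => by ring
    rw [this, hortho i j]
    by_cases h : i = j
    · subst h; simp
    · simp [h]
  have hAspec : A = ∑ i, (s i : ℂ) • Q i := by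
    rw [hA.spectral_theorem]
    ext a b
    simp only [Matrix.sum_apply, Matrix.smul_apply, hQ, Matrix.of_apply, Matrix.mul_apply,
      Unitary.conjStarAlgAut_apply, Matrix.diagonal_apply, Matrix.star_apply, Complex.star_def, Function.comp_apply,
      smul_eq_mul, mul_ite, mul_zero, ite_mul, zero_mul, Finset.sum_ite_eq, Finset.sum_ite_eq',
      Finset.mem_univ, if_true]
    apply Finset.sum_congr rfl
    intro i _
    have hcast : ((s i : ℝ) : ℂ) = RCLike.ofReal (hA.eigenvalues i) := rfl
    rw [hcast]
    ring
  refine ⟨Q, s, ?_, ?_, ?_, hAspec, ?_⟩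
  · intro i
    constructor
    · ext a b
      simp only [Matrix.conjTranspose_apply, hQ, Matrix.of_apply, star_mul',
        Complex.star_def, Complex.conj_conj]
      ring
    · have := hQmul i i; simpa using this
  · intro i j hij
    have := hQmul i j; simpa [hij] using this
  · ext a b
    simp only [Matrix.sum_apply, hQ, Matrix.of_apply, Matrix.one_apply]
    exact hcomp a b
  · conv_lhs => rw [hAspec, Finset.sum_mul]
    apply Finset.sum_congr rfl
    intro i _
    rw [Finset.mul_sum]
    rw [Finset.sum_congr rfl fun j _ => show (s i : ℂ) • Q i * ((s j : ℂ) • Q j)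
        = ((s i : ℂ) * (s j : ℂ)) • (if i = j then Q i else 0) by
      rw [← hQmul i j, smul_mul_assoc, Matrix.mul_smul, smul_smul]]
    simp [Finset.sum_ite_eq, pow_two, smul_smul]

/-- Single-copy case: any finite POVM unbiased for a Hermitian A has variance
at least Tr[A²ρ] − (Tr[Aρ])², with equality achieved by the spectral measurement of A. -/
theorem single_copy_optimal
    {d : ℕ} (A : Matrix (Fin d) (Fin d) ℂ) (hA : A.IsHermitian) :
    (∀ (ι : Type) (_ : Fintype ι) (P : ι → Matrix (Fin d) (Fin d) ℂ) (r : ι → ℝ),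
      (∀ i, (P i).PosSemidef) → (∑ i, P i = 1) →
      (∀ ρ : Matrix (Fin d) (Fin d) ℂ, IsDensity ρ →
        ∑ i, (r i : ℂ) * (P i * ρ).trace = (A * ρ).trace) →
      ∀ ρ : Matrix (Fin d) (Fin d) ℂ, IsDensity ρ →
        (∑ i, (r i) ^ 2 * ((P i * ρ).trace).re) - (((A * ρ).trace).re) ^ 2 ≥
          ((A * A * ρ).trace).re - (((A * ρ).trace).re) ^ 2) ∧
    (∃ (n : ℕ) (Q : Fin n → Matrix (Fin d) (Fin d) ℂ) (s : Fin n → ℝ),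
      (∀ i, (Q i).IsHermitian ∧ Q i * Q i = Q i) ∧
      (∀ i j, i ≠ j → Q i * Q j = 0) ∧
      (∑ i, Q i = 1) ∧
      (A = ∑ i, (s i : ℂ) • Q i) ∧
      (∀ ρ : Matrix (Fin d) (Fin d) ℂ, IsDensity ρ →
        ∑ i, (s i : ℂ) * (Q i * ρ).trace = (A * ρ).trace) ∧
      (∀ ρ : Matrix (Fin d) (Fin d) ℂ, IsDensity ρ →
        (∑ i, (s i) ^ 2 * ((Q i * ρ).trace).re) - (((A * ρ).trace).re) ^ 2 =
          ((A * A * ρ).trace).re - (((A * ρ).trace).re) ^ 2)) := by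
  constructor
  · intro ι inst P r hP hPsum hunb ρ hρ
    letI := inst
    have h := part1 A hA P r hP hPsum hunb ρ hρ
    exact sub_le_sub_right h _
  · obtain ⟨Q, s, h1, h2, h3, h4, h5⟩ := part2 A hA
    refine ⟨d, Q, s, h1, h2, h3, h4, ?_, ?_⟩
    · intro ρ hρ
      calc ∑ i, (s i : ℂ) * (Q i * ρ).trace
          = ((∑ i, (s i : ℂ) • Q i) * ρ).trace := (trace_smul_sum _ _ _).symm
        _ = (A * ρ).trace := by rw [← h4]
    · intro ρ hρ
      have htr : (A * A * ρ).trace = ∑ i, ((s i : ℂ)^2) * (Q i * ρ).trace := by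
        rw [h5, trace_smul_sum]
      rw [htr, Complex.re_sum]
      congr 1
      apply Finset.sum_congr rfl
      intro i _
      rw [show ((s i : ℂ)^2) = ((s i ^ 2 : ℝ) : ℂ) by push_cast; ring, Complex.re_ofReal_mul]
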